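/- Let k = 2 with group matrices A ∈ ℝ^{a×n} and B ∈ ℝ^{b×n}. If a unit vector v* minimizes v ↦ max(h_A(v), h_B(v)) over the unit sphere, then h_A(v*) = h_B(v*). -/

import Mathlib

open Matrix

/-- The largest eigenvalue of a real symmetric matrix, via its Rayleigh-quotient
characterization: `λmax(M) = sup { vᵀ M v : ‖v‖ = 1 }`. -/
noncomputable def lamMax {n : ℕ} (M : Matrix (Fin n) (Fin n) ℝ) : ℝ :=
  sSup {r : ℝ | ∃ v : Fin n → ℝ, v ⬝ᵥ v = 1 ∧ r = v ⬝ᵥ (M *ᵥ v)}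

/-- The rank-1 fair loss `h_M(v) = λmax(MᵀM) − vᵀ(MᵀM)v`. -/
noncomputable def fairLoss {m n : ℕ} (M : Matrix (Fin m) (Fin n) ℝ) (v : Fin n → ℝ) : ℝ :=
  lamMax (Mᵀ * M) - v ⬝ᵥ ((Mᵀ * M) *ᵥ v)

lemma exists_max {n : ℕ} (M : Matrix (Fin n) (Fin n) ℝ) (v0 : Fin n → ℝ) (hv0 : v0 ⬝ᵥ v0 = 1) :
    ∃ w : Fin n → ℝ, w ⬝ᵥ w = 1 ∧ (∀ u : Fin n → ℝ, u ⬝ᵥ u = 1 → u ⬝ᵥ (M *ᵥ u) ≤ w ⬝ᵥ (M *ᵥ w))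
      ∧ lamMax M = w ⬝ᵥ (M *ᵥ w) := by
  set Sph : Set (Fin n → ℝ) := {v | v ⬝ᵥ v = 1} with hSph
  have hf : Continuous (fun v : Fin n → ℝ => v ⬝ᵥ (M *ᵥ v)) := by
    exact (continuous_id.dotProduct ((continuous_const).matrix_mulVec continuous_id))
  have hcl : IsClosed Sph := by
    have : Continuous (fun v : Fin n → ℝ => v ⬝ᵥ v) :=
      continuous_id.dotProduct continuous_id
    exact isClosed_singleton.preimage this
  have hsub : Sph ⊆ Metric.closedBall 0 1 := by
    intro v hvS
    simp only [Metric.mem_closedBall, dist_zero_right]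
    rw [pi_norm_le_iff_of_nonneg zero_le_one]
    intro i
    have h1 : (v i) * (v i) ≤ v ⬝ᵥ v := by
      have := Finset.single_le_sum (f := fun j => v j * v j)
        (fun j _ => mul_self_nonneg (v j)) (Finset.mem_univ i)
      simpa [dotProduct] using this
    have hvv : v ⬝ᵥ v = 1 := hvS
    rw [Real.norm_eq_abs, abs_le]
    constructor <;> nlinarith [hvv, h1]
  have hcomp : IsCompact Sph :=
    (isCompact_closedBall (0 : Fin n → ℝ) 1).of_isClosed_subset hcl hsub
  obtain ⟨w, hwS, hwmax⟩ := hcomp.exists_isMaxOn ⟨v0, hv0⟩ hf.continuousOn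
  refine ⟨w, hwS, fun u hu => hwmax hu, ?_⟩
  have hset : {r : ℝ | ∃ v : Fin n → ℝ, v ⬝ᵥ v = 1 ∧ r = v ⬝ᵥ (M *ᵥ v)}
      = (fun v : Fin n → ℝ => v ⬝ᵥ (M *ᵥ v)) '' Sph := by
    ext r; constructor
    · rintro ⟨v, h1, rfl⟩; exact ⟨v, h1, rfl⟩
    · rintro ⟨v, h1, rfl⟩; exact ⟨v, h1, rfl⟩
  rw [lamMax, hset]
  apply le_antisymm
  · exact csSup_le ⟨_, ⟨w, hwS, rfl⟩⟩ (by rintro r ⟨v, h1, rfl⟩; exact hwmax h1)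
  · exact le_csSup ⟨_, by rintro r ⟨v, h1, rfl⟩; exact hwmax h1⟩ ⟨w, hwS, rfl⟩


lemma dp_self_nonneg {n : ℕ} (p : Fin n → ℝ) : 0 ≤ p ⬝ᵥ p :=
  Finset.sum_nonneg fun i _ => mul_self_nonneg (p i)

lemma rayleigh_bound {n : ℕ} (M : Matrix (Fin n) (Fin n) ℝ) (lam : ℝ)
    (hmax : ∀ u : Fin n → ℝ, u ⬝ᵥ u = 1 → u ⬝ᵥ (M *ᵥ u) ≤ lam)
    (p : Fin n → ℝ) : p ⬝ᵥ (M *ᵥ p) ≤ lam * (p ⬝ᵥ p) := by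
  rcases eq_or_ne (p ⬝ᵥ p) 0 with h0 | h0
  · have hp : p = 0 := by rwa [dotProduct_self_eq_zero] at h0
    simp [hp]
  · have hpos : 0 < p ⬝ᵥ p := lt_of_le_of_ne (dp_self_nonneg p) (Ne.symm h0)
    set r : ℝ := Real.sqrt (p ⬝ᵥ p) with hr
    have hrpos : 0 < r := Real.sqrt_pos.mpr hpos
    have hr2 : r * r = p ⬝ᵥ p := Real.mul_self_sqrt hpos.le
    have hu : (r⁻¹ • p) ⬝ᵥ (r⁻¹ • p) = 1 := by
      rw [smul_dotProduct, dotProduct_smul, smul_eq_mul, smul_eq_mul]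
      field_simp
      nlinarith [hr2]
    have := hmax (r⁻¹ • p) hu
    rw [smul_dotProduct, Matrix.mulVec_smul, dotProduct_smul,
      smul_eq_mul, smul_eq_mul] at this
    have hr2' : r ≠ 0 := hrpos.ne'
    have h3 : (r * r) * (r⁻¹ * (r⁻¹ * (p ⬝ᵥ M *ᵥ p))) = p ⬝ᵥ M *ᵥ p := by
      field_simp
    have h4 := mul_le_mul_of_nonneg_left this (mul_pos hrpos hrpos).le
    rw [h3] at h4
    rw [← hr2]
    linarith [h4]

-- cross term vanishes at the maximizer
lemma cross_zero {n : ℕ} (M : Matrix (Fin n) (Fin n) ℝ) (lam : ℝ)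
    (hmax : ∀ u : Fin n → ℝ, u ⬝ᵥ u = 1 → u ⬝ᵥ (M *ᵥ u) ≤ lam)
    (hsym : ∀ x y : Fin n → ℝ, x ⬝ᵥ (M *ᵥ y) = y ⬝ᵥ (M *ᵥ x))
    (w p : Fin n → ℝ) (hw : w ⬝ᵥ w = 1) (hwlam : w ⬝ᵥ (M *ᵥ w) = lam)
    (hortho : w ⬝ᵥ p = 0) : w ⬝ᵥ (M *ᵥ p) = 0 := by
  set β : ℝ := w ⬝ᵥ (M *ᵥ p) with hβ
  set K : ℝ := lam * (p ⬝ᵥ p) - p ⬝ᵥ (M *ᵥ p) with hK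
  have hK0 : 0 ≤ K := sub_nonneg.mpr (rayleigh_bound M lam hmax p)
  have key : ∀ ε : ℝ, 2 * ε * β ≤ ε ^ 2 * K := by
    intro ε
    have hz := rayleigh_bound M lam hmax (w + ε • p)
    have e1 : (w + ε • p) ⬝ᵥ (M *ᵥ (w + ε • p))
        = lam + 2 * ε * β + ε ^ 2 * (p ⬝ᵥ (M *ᵥ p)) := by
      rw [Matrix.mulVec_add, Matrix.mulVec_smul]
      simp only [add_dotProduct, smul_dotProduct, dotProduct_add,
        dotProduct_smul, smul_eq_mul, hwlam]
      have := hsym p w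
      rw [← hβ, this]
      ring
    have e2 : (w + ε • p) ⬝ᵥ (w + ε • p) = 1 + ε ^ 2 * (p ⬝ᵥ p) := by
      simp only [add_dotProduct, smul_dotProduct, dotProduct_add,
        dotProduct_smul, smul_eq_mul, hw, hortho]
      have : p ⬝ᵥ w = 0 := by rwa [dotProduct_comm]
      rw [this]; ring
    rw [e1, e2] at hz
    nlinarith [hz]
  by_contra hβne
  have hβ2 : 0 < β ^ 2 := by positivity
  have h := key (β / (K + 1))
  have hK1 : (0:ℝ) < K + 1 := by linarith
  have hK1' : (K + 1) ≠ 0 := hK1.ne'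
  field_simp at h
  nlinarith [h, hK0, hβ2, mul_nonneg hβ2.le hK0, mul_pos hβ2 hK1]


lemma sym_dp {m n : ℕ} (M : Matrix (Fin m) (Fin n) ℝ) (x y : Fin n → ℝ) :
    x ⬝ᵥ ((Mᵀ * M) *ᵥ y) = y ⬝ᵥ ((Mᵀ * M) *ᵥ x) := by
  rw [← Matrix.mulVec_mulVec, ← Matrix.mulVec_mulVec,
    Matrix.dotProduct_mulVec x Mᵀ, Matrix.dotProduct_mulVec y Mᵀ,
    Matrix.vecMul_transpose, Matrix.vecMul_transpose, dotProduct_comm]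




set_option maxHeartbeats 1000000 in
lemma improve {a b n : ℕ} (A : Matrix (Fin a) (Fin n) ℝ) (B : Matrix (Fin b) (Fin n) ℝ)
    (v : Fin n → ℝ) (hv : v ⬝ᵥ v = 1) (hlt : fairLoss B v < fairLoss A v) :
    ∃ u : Fin n → ℝ, u ⬝ᵥ u = 1 ∧ fairLoss A u < fairLoss A v ∧ fairLoss B u < fairLoss A v := by
  set S := Aᵀ * A with hS
  set T := Bᵀ * B with hT
  have hsymS : ∀ x y : Fin n → ℝ, x ⬝ᵥ (S *ᵥ y) = y ⬝ᵥ (S *ᵥ x) := sym_dp A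
  have hsymT : ∀ x y : Fin n → ℝ, x ⬝ᵥ (T *ᵥ y) = y ⬝ᵥ (T *ᵥ x) := sym_dp B
  obtain ⟨w0, hw0, hw0max, hlamS⟩ := exists_max S v hv
  obtain ⟨z, hz, hzmax, hlamT⟩ := exists_max T v hv
  set lam := lamMax S with hlam
  set mu := lamMax T with hmu
  have hmaxS : ∀ u : Fin n → ℝ, u ⬝ᵥ u = 1 → u ⬝ᵥ (S *ᵥ u) ≤ lam := by
    intro u hu; rw [hlamS]; exact hw0max u hu
  have hmaxT : ∀ u : Fin n → ℝ, u ⬝ᵥ u = 1 → u ⬝ᵥ (T *ᵥ u) ≤ mu := by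
    intro u hu; rw [hlamT]; exact hzmax u hu
  -- choose sign of the maximizer
  obtain ⟨w, hw, hwq, hc⟩ : ∃ w : Fin n → ℝ, w ⬝ᵥ w = 1 ∧ w ⬝ᵥ (S *ᵥ w) = lam ∧ 0 ≤ v ⬝ᵥ w := by
    rcases le_or_gt 0 (v ⬝ᵥ w0) with h | h
    · exact ⟨w0, hw0, hlamS.symm, h⟩
    · refine ⟨-w0, ?_, ?_, ?_⟩
      · simpa using hw0
      · rw [Matrix.mulVec_neg, dotProduct_neg, neg_dotProduct, neg_neg]
        exact hlamS.symm
      · rw [dotProduct_neg]; linarith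
  set c := v ⬝ᵥ w with hcdef
  set p := v - c • w with hp
  have hwv : w ⬝ᵥ v = c := by rw [dotProduct_comm]
  have hortho : w ⬝ᵥ p = 0 := by
    rw [hp, dotProduct_sub, dotProduct_smul, hwv, smul_eq_mul, hw]; ring
  have hcross : w ⬝ᵥ (S *ᵥ p) = 0 := cross_zero S lam hmaxS hsymS w p hw hwq hortho
  have hvdec : v = c • w + p := by rw [hp]; abel
  have hwSv : w ⬝ᵥ (S *ᵥ v) = c * lam := by
    conv_lhs => rw [hvdec]
    rw [Matrix.mulVec_add, Matrix.mulVec_smul, dotProduct_add, dotProduct_smul,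
      smul_eq_mul, hwq, hcross]; ring
  have hvSw : v ⬝ᵥ (S *ᵥ w) = c * lam := by rw [hsymS v w]; exact hwSv
  set d := fairLoss A v with hd
  set fB := fairLoss B v with hfB
  have hfBnn : 0 ≤ fB := by
    rw [hfB, fairLoss]; rw [← hT, ← hmu]
    linarith [hmaxT v hv]
  have hdpos : 0 < d := lt_of_le_of_lt hfBnn hlt
  have hqSv : v ⬝ᵥ (S *ᵥ v) = lam - d := by
    rw [hd, fairLoss, ← hS, ← hlam]; ring
  -- B-side quantities
  set qv := v ⬝ᵥ (T *ᵥ v) with hqv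
  set t := v ⬝ᵥ (T *ᵥ w) with ht
  set mm := w ⬝ᵥ (T *ᵥ w) with hmm
  have hwTv : w ⬝ᵥ (T *ᵥ v) = t := by rw [hsymT w v]
  set K := |2 * c * qv - 2 * t| + |qv - mm| with hK
  have hK0 : 0 ≤ K := by positivity
  set ε := min 1 ((d - fB) / (K + 1)) with hε
  have hεpos : 0 < ε := lt_min one_pos (div_pos (by linarith) (by linarith))
  have hε1 : ε ≤ 1 := min_le_left _ _
  have hεK : ε * K < d - fB := by
    have h1 : ε ≤ (d - fB) / (K + 1) := min_le_right _ _
    have h2 : ε * (K + 1) ≤ d - fB := by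
      rw [← le_div_iff₀ (by linarith : (0:ℝ) < K + 1)]; exact h1
    nlinarith [hεpos]
  set N2 := 1 + 2 * ε * c + ε ^ 2 with hN2
  have hN2gt : 1 < N2 := by nlinarith [hεpos, hc]
  have hN2pos : 0 < N2 := by linarith
  set r := Real.sqrt N2 with hr
  have hrpos : 0 < r := Real.sqrt_pos.mpr hN2pos
  have hr2 : r * r = N2 := Real.mul_self_sqrt hN2pos.le
  set y := v + ε • w with hy
  set u := r⁻¹ • y with hu
  have hinv : r⁻¹ * r⁻¹ = N2⁻¹ := by rw [← mul_inv, hr2]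
  have hyy : y ⬝ᵥ y = N2 := by
    rw [hy]
    simp only [add_dotProduct, dotProduct_add, smul_dotProduct,
      dotProduct_smul, smul_eq_mul, hv, hw, hwv, ← hcdef]
    ring
  have huu : u ⬝ᵥ u = 1 := by
    rw [hu, smul_dotProduct, dotProduct_smul, smul_eq_mul, smul_eq_mul, hyy,
      ← mul_assoc, hinv, inv_mul_cancel₀ hN2pos.ne']
  have hySy : y ⬝ᵥ (S *ᵥ y) = (lam - d) + 2 * ε * (c * lam) + ε ^ 2 * lam := by
    rw [hy, Matrix.mulVec_add, Matrix.mulVec_smul]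
    simp only [add_dotProduct, dotProduct_add, smul_dotProduct,
      dotProduct_smul, smul_eq_mul, hqSv, hvSw, hwSv, hwq]
    ring
  have hyTy : y ⬝ᵥ (T *ᵥ y) = qv + 2 * ε * t + ε ^ 2 * mm := by
    rw [hy, Matrix.mulVec_add, Matrix.mulVec_smul]
    simp only [add_dotProduct, dotProduct_add, smul_dotProduct,
      dotProduct_smul, smul_eq_mul, hwTv, ← ht, ← hqv, ← hmm]
    ring
  have hqSu : u ⬝ᵥ (S *ᵥ u) = N2⁻¹ * ((lam - d) + 2 * ε * (c * lam) + ε ^ 2 * lam) := by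
    rw [hu, smul_dotProduct, Matrix.mulVec_smul, dotProduct_smul,
      smul_eq_mul, smul_eq_mul, ← mul_assoc, hinv, hySy]
  have hqTu : u ⬝ᵥ (T *ᵥ u) = N2⁻¹ * (qv + 2 * ε * t + ε ^ 2 * mm) := by
    rw [hu, smul_dotProduct, Matrix.mulVec_smul, dotProduct_smul,
      smul_eq_mul, smul_eq_mul, ← mul_assoc, hinv, hyTy]
  have hfBval : fB = mu - qv := by rw [hfB, fairLoss, ← hT, ← hmu, ← hqv]
  clear_value S T p lam mu c d fB ε N2 r y u K qv t mm
  refine ⟨u, huu, ?_, ?_⟩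
  · -- fairLoss A u = d / N2 < d
    have hN2ne : N2 ≠ 0 := hN2pos.ne'
    have hfu : fairLoss A u = d / N2 := by
      rw [fairLoss, ← hS, ← hlam, hqSu]
      field_simp
      linear_combination lam * hN2
    rw [hfu, div_lt_iff₀ hN2pos]
    calc d = d * 1 := (mul_one d).symm
      _ < d * N2 := mul_lt_mul_of_pos_left hN2gt hdpos
  · -- fairLoss B u ≤ fB + ε * K < d
    set X := (2 * c * qv - 2 * t) + ε * (qv - mm) with hX
    have hN2ne : N2 ≠ 0 := hN2pos.ne'
    have heq : fairLoss B u = fB + ε * X / N2 := by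
      rw [fairLoss, ← hT, ← hmu, hqTu, hfBval, hX]
      field_simp
      linear_combination qv * hN2
    have hXK : X ≤ K := by
      have h1 : ε * (qv - mm) ≤ ε * |qv - mm| :=
        mul_le_mul_of_nonneg_left (le_abs_self _) hεpos.le
      have h2 : ε * |qv - mm| ≤ |qv - mm| :=
        mul_le_of_le_one_left (abs_nonneg _) hε1
      have h3 := le_abs_self (2 * c * qv - 2 * t)
      rw [hX, hK]; linarith
    have hbound : ε * X / N2 ≤ ε * K := by
      rw [div_le_iff₀ hN2pos]
      have h4 : ε * X ≤ ε * K := mul_le_mul_of_nonneg_left hXK hεpos.le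
      have h5 : ε * K ≤ ε * K * N2 :=
        le_mul_of_one_le_right (mul_nonneg hεpos.le hK0) hN2gt.le
      exact h4.trans h5
    rw [heq]
    linarith only [hbound, hεK, hεpos]

/-- for two groups `A, B`, any unit vector `v*` minimizing
`v ↦ max(h_A(v), h_B(v))` over the unit sphere satisfies `h_A(v*) = h_B(v*)`. -/
theorem stmt5 {a b n : ℕ} (A : Matrix (Fin a) (Fin n) ℝ) (B : Matrix (Fin b) (Fin n) ℝ)
    (vstar : Fin n → ℝ) (hv : vstar ⬝ᵥ vstar = 1)
    (hmin : ∀ u : Fin n → ℝ, u ⬝ᵥ u = 1 →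
      max (fairLoss A vstar) (fairLoss B vstar) ≤ max (fairLoss A u) (fairLoss B u)) :
    fairLoss A vstar = fairLoss B vstar := by
  by_contra hne
  rcases lt_or_gt_of_ne hne with h | h
  · obtain ⟨u, hu, h1, h2⟩ := improve B A vstar hv h
    have hle := hmin u hu
    rw [max_eq_right h.le] at hle
    exact absurd hle (not_le.mpr (max_lt h2 h1))
  · obtain ⟨u, hu, h1, h2⟩ := improve A B vstar hv h
    have hle := hmin u hu
    rw [max_eq_left h.le] at hle
    exact absurd hle (not_le.mpr (max_lt h1 h2))
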